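/- Let Q be the principal submatrix of the normalized adjacency matrix of a (d,λ)-expander indexed by V∖F, with adversarial density α_F < 1 − λ. Define Q̄ = (I − R)^{-1/2} Q (I − R)^{-1/2} where R is the diagonal matrix with R_{ww} = deg_F(w)/d. Then λ₁(Q̄) = 1 with an ℓ₂-normalized first eigenvector φ̄₁ given by φ̄₁(w)² = deg_{V∖F}(w) / Σ_{u∈V∖F} deg_{V∖F}(u), and max(|λ₂(Q̄)|, |λ_{n−f}(Q̄)|) ≤ λ/(1 − α_F). -/

import Mathlib

open Matrix Finset

/-- An orthonormal eigenbasis of a real symmetric matrix, with eigenvalues listed in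
decreasing order (with multiplicity). -/
def EigSystem {ι : Type} [Fintype ι] {k : ℕ} (M : Matrix ι ι ℝ)
    (μ : Fin k → ℝ) (φ : Fin k → ι → ℝ) : Prop :=
  Fintype.card ι = k ∧
  (∀ a b, ∑ i, φ a i * φ b i = if a = b then (1 : ℝ) else 0) ∧
  (∀ a, M.mulVec (φ a) = μ a • φ a) ∧
  (∀ a b : Fin k, a ≤ b → μ b ≤ μ a)

section Aux
variable {ι : Type} [Fintype ι] [DecidableEq ι] {k : ℕ} {M : Matrix ι ι ℝ}
    {μ : Fin k → ℝ} {φ : Fin k → ι → ℝ}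

lemma eig_dual (h : EigSystem M μ φ) (i j : ι) :
    ∑ a, φ a i * φ a j = if i = j then (1:ℝ) else 0 := by
  obtain ⟨hcard, horth, -, -⟩ := h
  let e : ι ≃ Fin k := Fintype.equivFinOfCardEq hcard
  have h1 : (Matrix.of fun a b => φ a (e.symm b)) * (Matrix.of fun a b => φ a (e.symm b))ᵀ = 1 := by
    ext a b
    simp only [Matrix.mul_apply, Matrix.transpose_apply, Matrix.of_apply, Matrix.one_apply]
    rw [Equiv.sum_comp e.symm (fun i => φ a i * φ b i), horth a b]
  have h2 := mul_eq_one_comm.mp h1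
  have h3 := congrFun (congrFun h2 (e i)) (e j)
  simpa [Matrix.mul_apply, Matrix.transpose_apply, Matrix.one_apply,
    Equiv.apply_eq_iff_eq] using h3

lemma eig_expand (h : EigSystem M μ φ) (z : ι → ℝ) (i : ι) :
    ∑ a, (∑ j, φ a j * z j) * φ a i = z i := by
  have step : ∑ a, (∑ j, φ a j * z j) * φ a i
      = ∑ j, (∑ a, φ a j * φ a i) * z j := by
    calc ∑ a, (∑ j, φ a j * z j) * φ a i
        = ∑ a, ∑ j, (φ a j * φ a i) * z j := by
          refine Finset.sum_congr rfl fun a _ => ?_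
          rw [Finset.sum_mul]
          exact Finset.sum_congr rfl fun j _ => by ring
      _ = ∑ j, ∑ a, (φ a j * φ a i) * z j := Finset.sum_comm
      _ = ∑ j, (∑ a, φ a j * φ a i) * z j := by
          exact Finset.sum_congr rfl fun j _ => (Finset.sum_mul _ _ _).symm
  rw [step]
  simp [eig_dual h]

lemma eig_parseval (h : EigSystem M μ φ) (z : ι → ℝ) :
    ∑ a, (∑ i, φ a i * z i)^2 = ∑ i, z i ^ 2 := by
  calc ∑ a, (∑ i, φ a i * z i)^2
      = ∑ a, ∑ i, ((∑ j, φ a j * z j) * φ a i) * z i := by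
        refine Finset.sum_congr rfl fun a _ => ?_
        rw [sq, Finset.mul_sum]
        exact Finset.sum_congr rfl fun i _ => by ring
    _ = ∑ i, ∑ a, ((∑ j, φ a j * z j) * φ a i) * z i := Finset.sum_comm
    _ = ∑ i, (∑ a, (∑ j, φ a j * z j) * φ a i) * z i := by
        exact Finset.sum_congr rfl fun i _ => (Finset.sum_mul _ _ _).symm
    _ = ∑ i, z i ^ 2 := by
        exact Finset.sum_congr rfl fun i _ => by rw [eig_expand h, sq]

lemma eig_quadform (h : EigSystem M μ φ) (z : ι → ℝ) :
    z ⬝ᵥ M.mulVec z = ∑ a, μ a * (∑ i, φ a i * z i)^2 := by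
  have heig := h.2.2.1
  have hz : ∀ i, M.mulVec z i = ∑ a, (∑ j, φ a j * z j) * (μ a * φ a i) := by
    intro i
    calc M.mulVec z i = ∑ j, M i j * z j := by rw [Matrix.mulVec, dotProduct]
    _ = ∑ j, M i j * ∑ a, (∑ l, φ a l * z l) * φ a j := by
        exact Finset.sum_congr rfl fun j _ => by rw [eig_expand h]
    _ = ∑ j, ∑ a, (∑ l, φ a l * z l) * (M i j * φ a j) := by
        refine Finset.sum_congr rfl fun j _ => ?_
        rw [Finset.mul_sum]
        exact Finset.sum_congr rfl fun a _ => by ring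
    _ = ∑ a, ∑ j, (∑ l, φ a l * z l) * (M i j * φ a j) := Finset.sum_comm
    _ = ∑ a, (∑ l, φ a l * z l) * ∑ j, M i j * φ a j := by
        refine Finset.sum_congr rfl fun a _ => ?_
        rw [Finset.mul_sum]
    _ = ∑ a, (∑ l, φ a l * z l) * (μ a * φ a i) := by
        refine Finset.sum_congr rfl fun a _ => ?_
        have := congrFun (heig a) i
        rw [Matrix.mulVec, dotProduct] at this
        rw [this]; rfl
  calc z ⬝ᵥ M.mulVec z = ∑ i, z i * ∑ a, (∑ j, φ a j * z j) * (μ a * φ a i) := by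
        rw [dotProduct]
        exact Finset.sum_congr rfl fun i _ => by rw [hz i]
    _ = ∑ i, ∑ a, ((∑ j, φ a j * z j) * φ a i) * (μ a * z i) := by
        refine Finset.sum_congr rfl fun i _ => ?_
        rw [Finset.mul_sum]
        exact Finset.sum_congr rfl fun a _ => by ring
    _ = ∑ a, ∑ i, ((∑ j, φ a j * z j) * φ a i) * (μ a * z i) := Finset.sum_comm
    _ = ∑ a, μ a * ((∑ j, φ a j * z j) * ∑ i, φ a i * z i) := by
        refine Finset.sum_congr rfl fun a _ => ?_
        rw [Finset.mul_sum, Finset.mul_sum]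
        exact Finset.sum_congr rfl fun i _ => by ring
    _ = ∑ a, μ a * (∑ i, φ a i * z i)^2 := by
        exact Finset.sum_congr rfl fun a _ => by rw [sq]

end Aux

set_option maxHeartbeats 1000000 in
/-- Let `G` be a `(d,λ)`-expander on `n` vertices, `F` a set of
`f` curious nodes with adversarial density `α_F < 1 − λ`, `Q = Â[V∖F]` the
principal submatrix of the normalized adjacency matrix indexed by `V∖F`, `R` the
diagonal matrix with `R_ww = deg_F(w)/d`, and
`Q̄ = (I − R)^{-1/2} Q (I − R)^{-1/2}`.  Then `λ₁(Q̄) = 1`, with ℓ₂-normalized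
first eigenvector `φ̄₁` given by `φ̄₁(w)² = deg_{V∖F}(w)/Σ_{u∈V∖F} deg_{V∖F}(u)`,
and `max (|λ₂(Q̄)|, |λ_{n−f}(Q̄)|) ≤ λ/(1 − α_F)`. -/
theorem stmt_19 (n d f : ℕ) (hd : 0 < d) (hfn : f + 2 ≤ n)
    (G : SimpleGraph (Fin n)) [DecidableRel G.Adj] (hreg : G.IsRegularOfDegree d)
    (μ : Fin n → ℝ) (φ : Fin n → Fin n → ℝ)
    (hA : EigSystem ((d : ℝ)⁻¹ • G.adjMatrix ℝ) μ φ)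
    (lam : ℝ) (hlam : max |μ ⟨1, by omega⟩| |μ ⟨n - 1, by omega⟩| ≤ lam)
    (F : Finset (Fin n)) (hF : F.card = f) (hne : Fᶜ.Nonempty)
    (α : ℝ)
    (hα : α = Fᶜ.sup' hne fun v =>
        (((G.neighborFinset v).filter (· ∈ F)).card : ℝ) / d)
    (hsmall : α < 1 - lam)
    (Qbar : Matrix {v : Fin n // v ∉ F} {v : Fin n // v ∉ F} ℝ)
    (hQbar : Qbar =
        (Matrix.diagonal fun w : {v : Fin n // v ∉ F} =>
          (Real.sqrt (1 - (((G.neighborFinset (w : Fin n)).filter (· ∈ F)).card : ℝ) / d))⁻¹)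
        * ((d : ℝ)⁻¹ • G.adjMatrix ℝ).submatrix
            (fun w : {v : Fin n // v ∉ F} => (w : Fin n))
            (fun w : {v : Fin n // v ∉ F} => (w : Fin n))
        * (Matrix.diagonal fun w : {v : Fin n // v ∉ F} =>
          (Real.sqrt (1 - (((G.neighborFinset (w : Fin n)).filter (· ∈ F)).card : ℝ) / d))⁻¹))
    (φbar : {v : Fin n // v ∉ F} → ℝ)
    (hφbar : ∀ w : {v : Fin n // v ∉ F}, φbar w =
        Real.sqrt ((((G.neighborFinset (w : Fin n)).filter (· ∉ F)).card : ℝ)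
          / ∑ u : {v : Fin n // v ∉ F},
              (((G.neighborFinset (u : Fin n)).filter (· ∉ F)).card : ℝ)))
    (ν : Fin (n - f) → ℝ) (ψ : Fin (n - f) → {v : Fin n // v ∉ F} → ℝ)
    (hνψ : EigSystem Qbar ν ψ) :
    ν ⟨0, by omega⟩ = 1 ∧ Qbar.mulVec φbar = φbar ∧ (∑ w, φbar w ^ 2 = 1) ∧
      max |ν ⟨1, by omega⟩| |ν ⟨n - f - 1, by omega⟩| ≤ lam / (1 - α) := by
  classical
  have hd0 : (0:ℝ) < d := by exact_mod_cast hd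
  have hdne : (d:ℝ) ≠ 0 := ne_of_gt hd0
  have hlam0 : (0:ℝ) ≤ lam :=
    le_trans (abs_nonneg _) (le_trans (le_max_left _ _) hlam)
  set din : Fin n → ℝ := fun w => (((G.neighborFinset w).filter (· ∈ F)).card : ℝ) with hdin
  set dout : Fin n → ℝ := fun w => (((G.neighborFinset w).filter (· ∉ F)).card : ℝ) with hdout
  set S : ℝ := ∑ u : {v : Fin n // v ∉ F}, dout ↑u with hSdef
  set D : {v : Fin n // v ∉ F} → ℝ := fun w => (Real.sqrt (1 - din ↑w / d))⁻¹ with hD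
  have hφ' : ∀ w : {v : Fin n // v ∉ F}, φbar w = Real.sqrt (dout ↑w / S) := fun w => hφbar w
  have hι : Nonempty {v : Fin n // v ∉ F} := by
    obtain ⟨v, hv⟩ := hne
    exact ⟨⟨v, Finset.mem_compl.mp hv⟩⟩
  have hdin0 : ∀ w, 0 ≤ din w := fun w => by simp only [hdin]; positivity
  have hdout0 : ∀ w, 0 ≤ dout w := fun w => by simp only [hdout]; positivity
  have hdsum : ∀ w, din w + dout w = d := by
    intro w
    have h := Finset.card_filter_add_card_filter_not
      (s := G.neighborFinset w) (p := fun u => u ∈ F)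
    rw [SimpleGraph.card_neighborFinset_eq_degree, hreg w] at h
    simp only [hdin, hdout]
    exact_mod_cast h
  have hα1 : α < 1 := by linarith
  have hrle : ∀ w : {v : Fin n // v ∉ F}, din ↑w / d ≤ α := by
    intro w
    rw [hα]
    exact Finset.le_sup'
      (fun v => (((G.neighborFinset v).filter (· ∈ F)).card : ℝ) / d)
      (Finset.mem_compl.mpr w.2)
  have h1r : ∀ w : {v : Fin n // v ∉ F}, 0 < 1 - din ↑w / d := by
    intro w; have := hrle w; linarith
  have hkey : ∀ w, 1 - din w / d = dout w / d := by
    intro w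
    rw [eq_div_iff hdne, sub_mul, one_mul, div_mul_cancel₀ _ hdne]
    linarith [hdsum w]
  have hdoutpos : ∀ w : {v : Fin n // v ∉ F}, 0 < dout ↑w := by
    intro w
    have h := h1r w
    rw [hkey] at h
    calc (0:ℝ) < dout ↑w / d * d := mul_pos h hd0
      _ = dout ↑w := div_mul_cancel₀ _ hdne
  have hS : 0 < S := by
    rw [hSdef]
    exact Finset.sum_pos (fun u _ => hdoutpos u) Finset.univ_nonempty
  have hSne : S ≠ 0 := ne_of_gt hS
  have hDpos : ∀ w, 0 < D w := by
    intro w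
    simp only [hD]
    exact inv_pos.mpr (Real.sqrt_pos.mpr (h1r w))
  have hD2 : ∀ w, D w ^ 2 = (1 - din ↑w / d)⁻¹ := by
    intro w
    simp only [hD]
    rw [← Real.sqrt_inv, Real.sq_sqrt (inv_nonneg.mpr (le_of_lt (h1r w)))]
  have hAent : ∀ i j : Fin n, ((d : ℝ)⁻¹ • G.adjMatrix ℝ) i j
      = (d:ℝ)⁻¹ * (if G.Adj i j then 1 else 0) := by
    intro i j
    simp [Matrix.smul_apply, SimpleGraph.adjMatrix_apply]
  have hQent : ∀ w u : {v : Fin n // v ∉ F}, Qbar w u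
      = D w * ((d:ℝ)⁻¹ * (if G.Adj ↑w ↑u then 1 else 0)) * D u := by
    intro w u
    rw [hQbar, Matrix.mul_diagonal, Matrix.diagonal_mul, Matrix.submatrix_apply, hAent]
  have hsub : ∀ g : Fin n → ℝ, ∑ i ∈ Fᶜ, g i = ∑ w : {v : Fin n // v ∉ F}, g ↑w :=
    fun g => Finset.sum_subtype Fᶜ (fun x => Finset.mem_compl) g
  have hsplit : ∀ g : Fin n → ℝ, (∀ i ∈ F, g i = 0) →
      ∑ i, g i = ∑ w : {v : Fin n // v ∉ F}, g ↑w := by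
    intro g hg
    rw [← Finset.sum_compl_add_sum F g, Finset.sum_eq_zero hg, add_zero, hsub]
  have hrow : ∀ w : Fin n, ∑ u : {v : Fin n // v ∉ F},
      (if G.Adj w ↑u then (1:ℝ) else 0) = dout w := by
    intro w
    rw [← hsub fun i => if G.Adj w i then (1:ℝ) else 0, Finset.sum_boole]
    simp only [hdout]
    norm_cast
    congr 1
    ext u
    simp [SimpleGraph.mem_neighborFinset, and_comm]
  -- Part 3 : normalization
  have hnorm : ∑ w, φbar w ^ 2 = 1 := by
    have h1 : ∀ w : {v : Fin n // v ∉ F}, φbar w ^ 2 = dout ↑w / S := by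
      intro w
      rw [hφ' w, Real.sq_sqrt (div_nonneg (hdout0 ↑w) (le_of_lt hS))]
    rw [Finset.sum_congr rfl fun w _ => h1 w, ← Finset.sum_div, ← hSdef]
    exact div_self hSne
  -- Part 2 : fixed vector
  have hDφ : ∀ u : {v : Fin n // v ∉ F}, D u * φbar u = Real.sqrt (d / S) := by
    intro u
    rw [hφ' u]
    simp only [hD]
    rw [← Real.sqrt_inv,
      ← Real.sqrt_mul (inv_nonneg.mpr (le_of_lt (h1r u)))]
    congr 1
    rw [hkey ↑u, inv_div, div_mul_div_comm, mul_comm (d:ℝ) (dout ↑u),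
      mul_div_mul_left _ _ (ne_of_gt (hdoutpos u))]
  have hfix : Qbar.mulVec φbar = φbar := by
    funext w
    have e1 : Qbar.mulVec φbar w
        = ∑ u : {v : Fin n // v ∉ F},
            D w * ((d:ℝ)⁻¹ * (if G.Adj ↑w ↑u then 1 else 0)) * (D u * φbar u) := by
      rw [Matrix.mulVec, dotProduct]
      exact Finset.sum_congr rfl fun u _ => by rw [hQent w u]; ring
    have e2 : ∑ u : {v : Fin n // v ∉ F},
          D w * ((d:ℝ)⁻¹ * (if G.Adj ↑w ↑u then 1 else 0)) * (D u * φbar u)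
        = D w * (d:ℝ)⁻¹ * Real.sqrt (d/S)
            * ∑ u : {v : Fin n // v ∉ F}, (if G.Adj ↑w ↑u then (1:ℝ) else 0) := by
      rw [Finset.mul_sum]
      exact Finset.sum_congr rfl fun u _ => by rw [hDφ u]; ring
    rw [e1, e2, hrow ↑w, hφ' w]
    simp only [hD]
    rw [hkey ↑w]
    calc (Real.sqrt (dout ↑w / d))⁻¹ * (d:ℝ)⁻¹ * Real.sqrt (d/S) * dout ↑w
        = ((dout ↑w / d) / Real.sqrt (dout ↑w / d)) * Real.sqrt (d/S) := by ring
      _ = Real.sqrt (dout ↑w / d) * Real.sqrt (d/S) := by rw [Real.div_sqrt]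
      _ = Real.sqrt ((dout ↑w / d) * (d/S)) :=
          (Real.sqrt_mul (div_nonneg (hdout0 ↑w) (le_of_lt hd0)) _).symm
      _ = Real.sqrt (dout ↑w / S) := by
          congr 1
          rw [div_mul_div_comm, mul_comm (dout ↑w) (d:ℝ),
            mul_div_mul_left _ _ hdne]
  -- eigensystem components
  have hνψ' := hνψ
  obtain ⟨hcQ, horthQ, heigQ, hordQ⟩ := hνψ'
  have h0nf : 0 < n - f := by omega
  have h1nf : 1 < n - f := by omega
  -- Part 1 : top eigenvalue is 1
  have hν0ge : 1 ≤ ν ⟨0, h0nf⟩ := by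
    have hφQφ : φbar ⬝ᵥ Qbar.mulVec φbar = 1 := by
      rw [hfix, dotProduct]
      calc ∑ w, φbar w * φbar w = ∑ w, φbar w ^ 2 :=
            Finset.sum_congr rfl fun w _ => (sq (φbar w)).symm
        _ = 1 := hnorm
    have hquad := eig_quadform hνψ φbar
    have hpars := eig_parseval hνψ φbar
    rw [hnorm] at hpars
    have hle : ∑ a, ν a * (∑ w, ψ a w * φbar w)^2
        ≤ ∑ a, ν ⟨0, h0nf⟩ * (∑ w, ψ a w * φbar w)^2 :=
      Finset.sum_le_sum fun a _ =>
        mul_le_mul_of_nonneg_right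
          (hordQ ⟨0, h0nf⟩ a (Fin.le_def.mpr (Nat.zero_le _))) (sq_nonneg _)
    rw [← Finset.mul_sum, hpars, mul_one] at hle
    rw [hφQφ] at hquad
    linarith
  have hν0le : ν ⟨0, h0nf⟩ ≤ 1 := by
    set y : {v : Fin n // v ∉ F} → ℝ := fun w => D w * ψ ⟨0, h0nf⟩ w with hy
    have hMrow : ∀ w : {v : Fin n // v ∉ F},
        ∑ u : {v : Fin n // v ∉ F},
          (D w)^2 * ((d:ℝ)⁻¹ * (if G.Adj ↑w ↑u then 1 else 0)) = 1 := by
      intro w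
      rw [← Finset.mul_sum, ← Finset.mul_sum, hrow ↑w, hD2 w, hkey ↑w,
        mul_comm ((d:ℝ)⁻¹) (dout ↑w), ← div_eq_mul_inv]
      exact inv_mul_cancel₀ (div_ne_zero (ne_of_gt (hdoutpos w)) hdne)
    have heq : ∀ w : {v : Fin n // v ∉ F}, ν ⟨0, h0nf⟩ * y w
        = ∑ u : {v : Fin n // v ∉ F},
            ((D w)^2 * ((d:ℝ)⁻¹ * (if G.Adj ↑w ↑u then 1 else 0))) * y u := by
      intro w
      have h1 := congrFun (heigQ ⟨0, h0nf⟩) w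
      rw [Matrix.mulVec, dotProduct] at h1
      calc ν ⟨0, h0nf⟩ * y w = D w * (ν ⟨0, h0nf⟩ * ψ ⟨0, h0nf⟩ w) := by
            simp only [hy]; ring
        _ = D w * ∑ u, Qbar w u * ψ ⟨0, h0nf⟩ u := by rw [h1]; rfl
        _ = ∑ u, D w * (Qbar w u * ψ ⟨0, h0nf⟩ u) := Finset.mul_sum _ _ _
        _ = ∑ u : {v : Fin n // v ∉ F}, ((D w)^2 * ((d:ℝ)⁻¹ * (if G.Adj ↑w ↑u then 1 else 0))) * y u := by
            refine Finset.sum_congr rfl fun u _ => ?_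
            rw [hQent w u]
            simp only [hy]
            ring
    obtain ⟨w0, -, hmax⟩ :=
      Finset.exists_max_image Finset.univ (fun w => |y w|) Finset.univ_nonempty
    have hy0 : 0 < |y w0| := by
      have hne0 : ∃ u, ψ ⟨0, h0nf⟩ u ≠ 0 := by
        by_contra hh
        push_neg at hh
        have h := horthQ ⟨0, h0nf⟩ ⟨0, h0nf⟩
        rw [if_pos rfl, Finset.sum_eq_zero (fun u _ => by rw [hh u, mul_zero])] at h
        norm_num at h
      obtain ⟨u, hu⟩ := hne0
      have hyu : y u ≠ 0 := by
        simp only [hy]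
        exact mul_ne_zero (ne_of_gt (hDpos u)) hu
      exact lt_of_lt_of_le (abs_pos.mpr hyu) (hmax u (Finset.mem_univ u))
    have hent0 : ∀ w u : {v : Fin n // v ∉ F},
        0 ≤ (D w)^2 * ((d:ℝ)⁻¹ * (if G.Adj ↑w ↑u then 1 else 0)) := by
      intro w u
      have hite : (0:ℝ) ≤ (if G.Adj ↑w ↑u then (1:ℝ) else 0) := by positivity
      positivity
    have hstep : |ν ⟨0, h0nf⟩| * |y w0| ≤ 1 * |y w0| := by
      rw [one_mul]
      calc |ν ⟨0, h0nf⟩| * |y w0| = |ν ⟨0, h0nf⟩ * y w0| := (abs_mul _ _).symm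
        _ = |∑ u : {v : Fin n // v ∉ F}, ((D w0)^2 * ((d:ℝ)⁻¹ * (if G.Adj ↑w0 ↑u then 1 else 0))) * y u| := by
            rw [heq w0]
        _ ≤ ∑ u : {v : Fin n // v ∉ F}, |((D w0)^2 * ((d:ℝ)⁻¹ * (if G.Adj ↑w0 ↑u then 1 else 0))) * y u| :=
            Finset.abs_sum_le_sum_abs _ _
        _ = ∑ u : {v : Fin n // v ∉ F}, ((D w0)^2 * ((d:ℝ)⁻¹ * (if G.Adj ↑w0 ↑u then 1 else 0))) * |y u| := by
            refine Finset.sum_congr rfl fun u _ => ?_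
            rw [abs_mul, abs_of_nonneg (hent0 w0 u)]
        _ ≤ ∑ u : {v : Fin n // v ∉ F}, ((D w0)^2 * ((d:ℝ)⁻¹ * (if G.Adj ↑w0 ↑u then 1 else 0))) * |y w0| :=
            Finset.sum_le_sum fun u _ =>
              mul_le_mul_of_nonneg_left (hmax u (Finset.mem_univ u)) (hent0 w0 u)
        _ = |y w0| := by rw [← Finset.sum_mul, hMrow w0, one_mul]
    have habs := le_of_mul_le_mul_right hstep hy0
    calc ν ⟨0, h0nf⟩ ≤ |ν ⟨0, h0nf⟩| := le_abs_self _
      _ ≤ 1 := habs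
  -- Part 4 : spectral bound
  have h0n : 0 < n := by omega
  set Z : ({v : Fin n // v ∉ F} → ℝ) → Fin n → ℝ :=
    fun t i => if h : i ∈ F then 0 else D ⟨i, h⟩ * t ⟨i, h⟩ with hZ
  have hZF : ∀ t i, i ∈ F → Z t i = 0 := by
    intro t i hi
    simp only [hZ]
    exact dif_pos hi
  have hZval : ∀ t (w : {v : Fin n // v ∉ F}), Z t ↑w = D w * t w := by
    intro t w
    simp only [hZ]
    simp [w.2]
  have hZnorm : ∀ t : {v : Fin n // v ∉ F} → ℝ,
      ∑ i, (Z t i)^2 ≤ (1-α)⁻¹ * ∑ w, t w ^2 := by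
    intro t
    rw [hsplit (fun i => (Z t i)^2) (fun i hi => by show (Z t i)^2 = 0; rw [hZF t i hi]; ring), Finset.mul_sum]
    refine Finset.sum_le_sum fun w _ => ?_
    rw [hZval, mul_pow, hD2 w]
    have h2 : (1 - din ↑w / d)⁻¹ ≤ (1-α)⁻¹ := by
      apply inv_anti₀ (by linarith)
      have := hrle w
      linarith
    exact mul_le_mul_of_nonneg_right h2 (sq_nonneg _)
  have htrans : ∀ t : {v : Fin n // v ∉ F} → ℝ, t ⬝ᵥ Qbar.mulVec t
      = (Z t) ⬝ᵥ (((d:ℝ)⁻¹ • G.adjMatrix ℝ).mulVec (Z t)) := by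
    intro t
    rw [dotProduct, dotProduct]
    rw [hsplit (fun i => Z t i * ((d:ℝ)⁻¹ • G.adjMatrix ℝ).mulVec (Z t) i)
        (fun i hi => by show Z t i * ((d:ℝ)⁻¹ • G.adjMatrix ℝ).mulVec (Z t) i = 0
                        rw [hZF t i hi, zero_mul])]
    refine Finset.sum_congr rfl fun w _ => ?_
    rw [Matrix.mulVec, dotProduct, Matrix.mulVec, dotProduct]
    rw [hsplit (fun j => ((d:ℝ)⁻¹ • G.adjMatrix ℝ) ↑w j * Z t j)
        (fun j hj => by show ((d:ℝ)⁻¹ • G.adjMatrix ℝ) ↑w j * Z t j = 0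
                        rw [hZF t j hj, mul_zero])]
    rw [hZval, Finset.mul_sum, Finset.mul_sum]
    refine Finset.sum_congr rfl fun u _ => ?_
    rw [hZval, hQent w u, hAent]
    ring
  have hlow : ∀ t : {v : Fin n // v ∉ F} → ℝ,
      -(lam * ((1-α)⁻¹ * ∑ w, t w ^2)) ≤ t ⬝ᵥ Qbar.mulVec t := by
    intro t
    rw [htrans t, eig_quadform hA (Z t)]
    have hμlast : -lam ≤ μ ⟨n-1, by omega⟩ :=
      (abs_le.mp (le_trans (le_max_right _ _) hlam)).1
    have hbd : ∀ a : Fin n, -lam ≤ μ a := fun a =>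
      le_trans hμlast (hA.2.2.2 a ⟨n-1, by omega⟩
        (Fin.le_def.mpr (Nat.le_pred_of_lt a.isLt)))
    have step1 : ∑ a, (-lam) * (∑ i, φ a i * Z t i)^2
        ≤ ∑ a, μ a * (∑ i, φ a i * Z t i)^2 :=
      Finset.sum_le_sum fun a _ =>
        mul_le_mul_of_nonneg_right (hbd a) (sq_nonneg _)
    rw [← Finset.mul_sum, eig_parseval hA (Z t)] at step1
    have step2 : lam * ∑ i, (Z t i)^2 ≤ lam * ((1-α)⁻¹ * ∑ w, t w ^2) :=
      mul_le_mul_of_nonneg_left (hZnorm t) hlam0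
    have hre : (-lam) * (∑ i, (Z t i)^2) = -(lam * ∑ i, (Z t i)^2) := by ring
    rw [hre] at step1
    linarith
  have hup : ∀ t : {v : Fin n // v ∉ F} → ℝ,
      (∑ i, φ ⟨0, h0n⟩ i * Z t i) = 0 →
      t ⬝ᵥ Qbar.mulVec t ≤ lam * ((1-α)⁻¹ * ∑ w, t w ^2) := by
    intro t hortho
    rw [htrans t, eig_quadform hA (Z t)]
    have hμ1 : μ ⟨1, by omega⟩ ≤ lam :=
      le_trans (le_abs_self _) (le_trans (le_max_left _ _) hlam)
    have step1 : ∑ a, μ a * (∑ i, φ a i * Z t i)^2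
        ≤ ∑ a, lam * (∑ i, φ a i * Z t i)^2 := by
      refine Finset.sum_le_sum fun a _ => ?_
      by_cases ha : a = ⟨0, h0n⟩
      · rw [ha, hortho]
        simp
      · have hv : a.val ≠ 0 := fun hh => ha (Fin.ext hh)
        have ha1 : (⟨1, by omega⟩ : Fin n) ≤ a :=
          Fin.le_def.mpr (show 1 ≤ a.val by omega)
        exact mul_le_mul_of_nonneg_right
          (le_trans (hA.2.2.2 _ a ha1) hμ1) (sq_nonneg _)
    rw [← Finset.mul_sum, eig_parseval hA (Z t)] at step1
    have step2 : lam * ∑ i, (Z t i)^2 ≤ lam * ((1-α)⁻¹ * ∑ w, t w ^2) :=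
      mul_le_mul_of_nonneg_left (hZnorm t) hlam0
    linarith
  have hray : ∀ a : Fin (n-f), ψ a ⬝ᵥ Qbar.mulVec (ψ a) = ν a := by
    intro a
    have h := horthQ a a
    rw [if_pos rfl] at h
    rw [heigQ a, dotProduct_smul, smul_eq_mul, dotProduct, h, mul_one]
  have hψnorm : ∀ a : Fin (n-f), ∑ w, ψ a w ^ 2 = 1 := by
    intro a
    have h := horthQ a a
    rw [if_pos rfl] at h
    rw [← h]
    exact Finset.sum_congr rfl fun w _ => sq _
  have hlast_ge : -(lam * (1-α)⁻¹) ≤ ν ⟨n-f-1, by omega⟩ := by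
    have h := hlow (ψ ⟨n-f-1, by omega⟩)
    rw [hray, hψnorm, mul_one] at h
    exact h
  have hν1le : ν ⟨1, h1nf⟩ ≤ lam * (1-α)⁻¹ := by
    set a0 : ℝ := ∑ i, φ ⟨0, h0n⟩ i * Z (ψ ⟨0, h0nf⟩) i with ha0
    set b0 : ℝ := ∑ i, φ ⟨0, h0n⟩ i * Z (ψ ⟨1, h1nf⟩) i with hb0
    by_cases hzz : a0 = 0 ∧ b0 = 0
    · have h := hup (ψ ⟨1, h1nf⟩) (by rw [← hb0]; exact hzz.2)
      rw [hray, hψnorm, mul_one] at h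
      exact h
    · set x : {v : Fin n // v ∉ F} → ℝ :=
        fun w => b0 * ψ ⟨0, h0nf⟩ w - a0 * ψ ⟨1, h1nf⟩ w with hx
      have hZx : ∀ i, Z x i = b0 * Z (ψ ⟨0, h0nf⟩) i - a0 * Z (ψ ⟨1, h1nf⟩) i := by
        intro i
        simp only [hZ]
        by_cases hi : i ∈ F
        · simp [hi]
        · simp only [dif_neg hi]
          simp only [hx]
          ring
      have hcond : ∑ i, φ ⟨0, h0n⟩ i * Z x i = 0 := by
        calc ∑ i, φ ⟨0, h0n⟩ i * Z x i
            = ∑ i, (b0 * (φ ⟨0, h0n⟩ i * Z (ψ ⟨0, h0nf⟩) i)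
                - a0 * (φ ⟨0, h0n⟩ i * Z (ψ ⟨1, h1nf⟩) i)) := by
              refine Finset.sum_congr rfl fun i _ => ?_
              rw [hZx i]; ring
          _ = b0 * a0 - a0 * b0 := by
              rw [Finset.sum_sub_distrib, ← Finset.mul_sum, ← Finset.mul_sum,
                ← ha0, ← hb0]
          _ = 0 := by ring
      have e00 : ∑ w, ψ ⟨0, h0nf⟩ w * ψ ⟨0, h0nf⟩ w = 1 := by
        have h := horthQ ⟨0, h0nf⟩ ⟨0, h0nf⟩
        rwa [if_pos rfl] at h
      have e11 : ∑ w, ψ ⟨1, h1nf⟩ w * ψ ⟨1, h1nf⟩ w = 1 := by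
        have h := horthQ ⟨1, h1nf⟩ ⟨1, h1nf⟩
        rwa [if_pos rfl] at h
      have e01 : ∑ w, ψ ⟨0, h0nf⟩ w * ψ ⟨1, h1nf⟩ w = 0 := by
        have h := horthQ ⟨0, h0nf⟩ ⟨1, h1nf⟩
        rwa [if_neg (by simp [Fin.ext_iff])] at h
      have hxnorm : ∑ w, x w ^ 2 = b0^2 + a0^2 := by
        calc ∑ w, x w ^ 2
            = ∑ w, (b0^2 * (ψ ⟨0, h0nf⟩ w * ψ ⟨0, h0nf⟩ w)
                - (2*a0*b0) * (ψ ⟨0, h0nf⟩ w * ψ ⟨1, h1nf⟩ w)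
                + a0^2 * (ψ ⟨1, h1nf⟩ w * ψ ⟨1, h1nf⟩ w)) := by
              refine Finset.sum_congr rfl fun w _ => ?_
              simp only [hx]; ring
          _ = b0^2 * (∑ w, ψ ⟨0, h0nf⟩ w * ψ ⟨0, h0nf⟩ w)
              - (2*a0*b0) * (∑ w, ψ ⟨0, h0nf⟩ w * ψ ⟨1, h1nf⟩ w)
              + a0^2 * (∑ w, ψ ⟨1, h1nf⟩ w * ψ ⟨1, h1nf⟩ w) := by
              rw [Finset.sum_add_distrib, Finset.sum_sub_distrib,
                ← Finset.mul_sum, ← Finset.mul_sum, ← Finset.mul_sum]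
          _ = b0^2 + a0^2 := by rw [e00, e01, e11]; ring
      have hxquad : x ⬝ᵥ Qbar.mulVec x
          = b0^2 * ν ⟨0, h0nf⟩ + a0^2 * ν ⟨1, h1nf⟩ := by
        have hmv : ∀ w, Qbar.mulVec x w
            = b0 * (ν ⟨0, h0nf⟩ * ψ ⟨0, h0nf⟩ w)
              - a0 * (ν ⟨1, h1nf⟩ * ψ ⟨1, h1nf⟩ w) := by
          intro w
          have h0 := congrFun (heigQ ⟨0, h0nf⟩) w
          have h1 := congrFun (heigQ ⟨1, h1nf⟩) w
          rw [Matrix.mulVec, dotProduct] at h0 h1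
          rw [Matrix.mulVec, dotProduct]
          calc ∑ u, Qbar w u * x u
              = ∑ u, (b0 * (Qbar w u * ψ ⟨0, h0nf⟩ u)
                  - a0 * (Qbar w u * ψ ⟨1, h1nf⟩ u)) := by
                refine Finset.sum_congr rfl fun u _ => ?_
                simp only [hx]; ring
            _ = b0 * (∑ u, Qbar w u * ψ ⟨0, h0nf⟩ u)
                - a0 * (∑ u, Qbar w u * ψ ⟨1, h1nf⟩ u) := by
                rw [Finset.sum_sub_distrib, ← Finset.mul_sum, ← Finset.mul_sum]
            _ = b0 * (ν ⟨0, h0nf⟩ * ψ ⟨0, h0nf⟩ w)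
                - a0 * (ν ⟨1, h1nf⟩ * ψ ⟨1, h1nf⟩ w) := by
                rw [h0, h1]; rfl
        rw [dotProduct]
        calc ∑ w, x w * Qbar.mulVec x w
            = ∑ w, ((b0^2 * ν ⟨0, h0nf⟩) * (ψ ⟨0, h0nf⟩ w * ψ ⟨0, h0nf⟩ w)
                - (a0*b0*ν ⟨1, h1nf⟩ + a0*b0*ν ⟨0, h0nf⟩)
                    * (ψ ⟨0, h0nf⟩ w * ψ ⟨1, h1nf⟩ w)
                + (a0^2 * ν ⟨1, h1nf⟩) * (ψ ⟨1, h1nf⟩ w * ψ ⟨1, h1nf⟩ w)) := by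
              refine Finset.sum_congr rfl fun w _ => ?_
              rw [hmv w]; simp only [hx]; ring
          _ = (b0^2 * ν ⟨0, h0nf⟩) * (∑ w, ψ ⟨0, h0nf⟩ w * ψ ⟨0, h0nf⟩ w)
              - (a0*b0*ν ⟨1, h1nf⟩ + a0*b0*ν ⟨0, h0nf⟩)
                  * (∑ w, ψ ⟨0, h0nf⟩ w * ψ ⟨1, h1nf⟩ w)
              + (a0^2 * ν ⟨1, h1nf⟩) * (∑ w, ψ ⟨1, h1nf⟩ w * ψ ⟨1, h1nf⟩ w) := by
              rw [Finset.sum_add_distrib, Finset.sum_sub_distrib,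
                ← Finset.mul_sum, ← Finset.mul_sum, ← Finset.mul_sum]
          _ = b0^2 * ν ⟨0, h0nf⟩ + a0^2 * ν ⟨1, h1nf⟩ := by
              rw [e00, e01, e11]; ring
      have hub := hup x hcond
      rw [hxquad, hxnorm] at hub
      have hord01 : ν ⟨1, h1nf⟩ ≤ ν ⟨0, h0nf⟩ :=
        hordQ _ _ (Fin.mk_le_mk.mpr (by omega))
      have hkey2 : ν ⟨1, h1nf⟩ * (b0^2 + a0^2)
          ≤ (lam * (1-α)⁻¹) * (b0^2 + a0^2) := by
        nlinarith [sq_nonneg b0, sq_nonneg a0]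
      have hpos : 0 < b0^2 + a0^2 := by
        rcases not_and_or.mp hzz with h | h
        · have h2 : a0^2 ≠ 0 := pow_ne_zero 2 h
          have h3 := lt_of_le_of_ne (sq_nonneg a0) (Ne.symm h2)
          have := sq_nonneg b0
          linarith
        · have h2 : b0^2 ≠ 0 := pow_ne_zero 2 h
          have h3 := lt_of_le_of_ne (sq_nonneg b0) (Ne.symm h2)
          have := sq_nonneg a0
          linarith
      exact le_of_mul_le_mul_right hkey2 hpos
  -- assemble
  have hdiv : lam / (1-α) = lam * (1-α)⁻¹ := div_eq_mul_inv _ _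
  refine ⟨le_antisymm hν0le hν0ge, hfix, hnorm, ?_⟩
  have hνord : ν ⟨n-f-1, by omega⟩ ≤ ν ⟨1, h1nf⟩ :=
    hordQ _ _ (Fin.mk_le_mk.mpr (by omega))
  rw [hdiv]
  have habs1 : |ν ⟨1, h1nf⟩| ≤ lam * (1-α)⁻¹ :=
    abs_le.mpr ⟨le_trans hlast_ge hνord, hν1le⟩
  have habs2 : |ν ⟨n-f-1, by omega⟩| ≤ lam * (1-α)⁻¹ :=
    abs_le.mpr ⟨hlast_ge, le_trans hνord hν1le⟩
  exact max_le habs1 habs2
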